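/- No-cloning theorem: Let n : ℕ, let V = EuclideanSpace ℂ (Fin n) and W = EuclideanSpace ℂ (Fin n × Fin n), and for v w : V write v ⊗ w : W for the vector (v ⊗ w) (i,j) = v i * w j. Suppose D : W →ₗ[ℂ] W preserves inner products (for all u v : W, ⟪D u, D v⟫ = ⟪u, v⟫), and suppose e₀, ψ, φ : V are unit vectors with D (e₀ ⊗ ψ) = ψ ⊗ ψ and D (e₀ ⊗ φ) = φ ⊗ φ. Then ⟪ψ, φ⟫ = 0 or ψ = φ. -/

import Mathlib

open scoped InnerProductSpace

/-- The Kronecker (tensor) product of two vectors in `EuclideanSpace ℂ (Fin n)`. -/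
noncomputable def tensV (n : ℕ) (v w : EuclideanSpace ℂ (Fin n)) :
    EuclideanSpace ℂ (Fin n × Fin n) :=
  WithLp.toLp 2 (fun p : Fin n × Fin n => v p.1 * w p.2)

lemma tensV_inner (n : ℕ) (v w v' w' : EuclideanSpace ℂ (Fin n)) :
    ⟪tensV n v w, tensV n v' w'⟫_ℂ = ⟪v, v'⟫_ℂ * ⟪w, w'⟫_ℂ := by
  simp only [PiLp.inner_apply, tensV, RCLike.inner_apply, Fintype.sum_prod_type,
    Finset.sum_mul_sum]
  congr 1; ext i; congr 1; ext j
  simp [map_mul]; ring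

/-- No-cloning theorem: an inner-product-preserving linear map cloning two unit states
forces them to be orthogonal or equal. -/
theorem no_cloning (n : ℕ)
    (D : EuclideanSpace ℂ (Fin n × Fin n) →ₗ[ℂ] EuclideanSpace ℂ (Fin n × Fin n))
    (hD : ∀ u v : EuclideanSpace ℂ (Fin n × Fin n), ⟪D u, D v⟫_ℂ = ⟪u, v⟫_ℂ)
    (e₀ ψ φ : EuclideanSpace ℂ (Fin n))
    (he₀ : ‖e₀‖ = 1) (hψ : ‖ψ‖ = 1) (hφ : ‖φ‖ = 1)
    (hDψ : D (tensV n e₀ ψ) = tensV n ψ ψ)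
    (hDφ : D (tensV n e₀ φ) = tensV n φ φ) :
    ⟪ψ, φ⟫_ℂ = 0 ∨ ψ = φ := by
  have he : ⟪e₀, e₀⟫_ℂ = 1 := by
    rw [inner_self_eq_norm_sq_to_K, he₀]; norm_num
  have key : ⟪ψ, φ⟫_ℂ * ⟪ψ, φ⟫_ℂ = ⟪ψ, φ⟫_ℂ := by
    have h := hD (tensV n e₀ ψ) (tensV n e₀ φ)
    rw [hDψ, hDφ, tensV_inner, tensV_inner, he, one_mul] at h
    exact h
  have : ⟪ψ, φ⟫_ℂ * (⟪ψ, φ⟫_ℂ - 1) = 0 := by ring_nf; linear_combination key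
  rcases mul_eq_zero.mp this with h | h
  · exact Or.inl h
  · right
    have h1 : ⟪ψ, φ⟫_ℂ = 1 := sub_eq_zero.mp h
    exact (inner_eq_one_iff_of_norm_eq_one hψ hφ).mp h1
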